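/- Let E = EuclideanSpace ℝ (Fin n), μ a Borel probability measure on E satisfying the standing integrability assumption, and u ∈ E with ‖u‖ < 1. Suppose G_u has a unique minimizer q ∈ E. Let (X_i)_{i∈ℕ} be i.i.d. with law μ on (Ω, P), and let q̂_N : Ω → E (N ∈ ℕ) be any maps such that for P-almost every ω and every N ≥ 1, q̂_N(ω) is a minimizer of the empirical loss p ↦ (1/N) ∑_{i=0}^{N−1} ρ_u(X_i(ω), p). Then q̂_N → q P-almost surely. (Euclidean case of Theorem 4.1(b): strong consistency of sample quantiles.) -/

import Mathlib

open MeasureTheory Filter Topology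

/-- The data-based geometric quantile loss in Euclidean space:
`ρ_u(x,p) = ‖p − x‖ − ⟪u, p − x⟫`. -/
noncomputable def quantileLoss {n : ℕ} (u x p : EuclideanSpace ℝ (Fin n)) : ℝ :=
  ‖p - x‖ - inner ℝ u (p - x)

lemma ql_nonneg {n : ℕ} {u : EuclideanSpace ℝ (Fin n)} (hu : ‖u‖ ≤ 1)
    (x p : EuclideanSpace ℝ (Fin n)) : 0 ≤ quantileLoss u x p := by
  have h := real_inner_le_norm u (p - x)
  have : inner ℝ u (p - x) ≤ ‖p - x‖ := by
    calc (inner ℝ u (p - x) : ℝ) ≤ ‖u‖ * ‖p - x‖ := h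
    _ ≤ 1 * ‖p - x‖ := by gcongr
    _ = ‖p - x‖ := one_mul _
  simpa [quantileLoss] using this

lemma ql_lower {n : ℕ} (u x p : EuclideanSpace ℝ (Fin n)) :
    (1 - ‖u‖) * ‖p - x‖ ≤ quantileLoss u x p := by
  have h := real_inner_le_norm u (p - x)
  simp only [quantileLoss]
  nlinarith [norm_nonneg (p - x)]

lemma ql_upper {n : ℕ} (u x p : EuclideanSpace ℝ (Fin n)) :
    quantileLoss u x p ≤ (1 + ‖u‖) * ‖p - x‖ := by
  have h := abs_real_inner_le_norm u (p - x)
  simp only [quantileLoss]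
  nlinarith [abs_nonneg (inner ℝ u (p - x) : ℝ), neg_abs_le (inner ℝ u (p - x) : ℝ)]

lemma ql_lip {n : ℕ} (u x p p' : EuclideanSpace ℝ (Fin n)) :
    |quantileLoss u x p - quantileLoss u x p'| ≤ (1 + ‖u‖) * ‖p - p'‖ := by
  have h1 : quantileLoss u x p - quantileLoss u x p'
      = (‖p - x‖ - ‖p' - x‖) - inner ℝ u (p - p') := by
    simp only [quantileLoss]
    have : (inner ℝ u (p - x) : ℝ) - inner ℝ u (p' - x) = inner ℝ u (p - p') := by
      rw [← inner_sub_right]; congr 1; abel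
    linarith [this]
  rw [h1]
  have h2 : |‖p - x‖ - ‖p' - x‖| ≤ ‖p - p'‖ := by
    have := abs_norm_sub_norm_le (p - x) (p' - x)
    simpa [show p - x - (p' - x) = p - p' by abel] using this
  have h3 : |(inner ℝ u (p - p') : ℝ)| ≤ ‖u‖ * ‖p - p'‖ := abs_real_inner_le_norm u (p - p')
  calc |‖p - x‖ - ‖p' - x‖ - inner ℝ u (p - p')| ≤ |‖p - x‖ - ‖p' - x‖| + |(inner ℝ u (p - p') : ℝ)| :=
        abs_sub _ _
    _ ≤ ‖p - p'‖ + ‖u‖ * ‖p - p'‖ := add_le_add h2 h3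
    _ = (1 + ‖u‖) * ‖p - p'‖ := by ring

lemma ql_cont {n : ℕ} (u p : EuclideanSpace ℝ (Fin n)) :
    Continuous (fun x => quantileLoss u x p) := by
  unfold quantileLoss
  exact (continuous_const.sub continuous_id).norm.sub
    ((continuous_const.inner (continuous_const.sub continuous_id)))

lemma ql_integrable {n : ℕ} {μ : Measure (EuclideanSpace ℝ (Fin n))}
    [IsFiniteMeasure μ] (hnorm : Integrable (fun x => ‖x‖) μ) (u p : EuclideanSpace ℝ (Fin n)) :
    Integrable (fun x => quantileLoss u x p) μ := by
  have hb : Integrable (fun x => (1 + ‖u‖) * (‖p‖ + ‖x‖)) μ := by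
    have : Integrable (fun x : EuclideanSpace ℝ (Fin n) => ‖p‖ + ‖x‖) μ :=
      (integrable_const ‖p‖).add hnorm
    exact this.const_mul _
  refine hb.mono ((ql_cont u p).aestronglyMeasurable) ?_
  filter_upwards with x
  have h1 := ql_upper u x p
  have h2 : ‖p - x‖ ≤ ‖p‖ + ‖x‖ := norm_sub_le p x
  have hnn : (0:ℝ) ≤ quantileLoss u x p ∨ True := Or.inr trivial
  have habs : |quantileLoss u x p| ≤ (1 + ‖u‖) * (‖p‖ + ‖x‖) := by
    rw [abs_le]
    constructor
    · nlinarith [ql_lower u x p, norm_nonneg (p - x), norm_nonneg u, norm_nonneg p, norm_nonneg x]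
    · nlinarith [norm_nonneg u]
  rw [Real.norm_eq_abs, Real.norm_eq_abs]
  calc |quantileLoss u x p| ≤ (1 + ‖u‖) * (‖p‖ + ‖x‖) := habs
    _ ≤ |(1 + ‖u‖) * (‖p‖ + ‖x‖)| := le_abs_self _

lemma norm_integrable_of_assumption {n : ℕ} {μ : Measure (EuclideanSpace ℝ (Fin n))}
    {u₀ p₀ : EuclideanSpace ℝ (Fin n)} (hu₀ : ‖u₀‖ < 1)
    (hint : Integrable (fun x => quantileLoss u₀ x p₀) μ) [IsFiniteMeasure μ] :
    Integrable (fun x => ‖x‖) μ := by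
  have hpos : (0:ℝ) < 1 - ‖u₀‖ := by linarith
  have h1 : Integrable (fun x => ‖p₀ - x‖) μ := by
    have hb : Integrable (fun x => (1 - ‖u₀‖)⁻¹ * quantileLoss u₀ x p₀) μ := hint.const_mul _
    refine hb.mono ?_ ?_
    · exact ((continuous_const.sub continuous_id).norm).aestronglyMeasurable
    · filter_upwards with x
      have hl := ql_lower u₀ x p₀
      have hnn := ql_nonneg hu₀.le x p₀
      rw [Real.norm_eq_abs, Real.norm_eq_abs, abs_of_nonneg (norm_nonneg _),
        abs_of_nonneg (by positivity)]
      calc ‖p₀ - x‖ = (1 - ‖u₀‖)⁻¹ * ((1 - ‖u₀‖) * ‖p₀ - x‖) := by field_simp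
        _ ≤ (1 - ‖u₀‖)⁻¹ * quantileLoss u₀ x p₀ := by
            exact mul_le_mul_of_nonneg_left hl (by positivity)
  have h2 : Integrable (fun x : EuclideanSpace ℝ (Fin n) => ‖p₀ - x‖ + ‖p₀‖) μ :=
    h1.add (integrable_const _)
  refine h2.mono continuous_norm.aestronglyMeasurable ?_
  filter_upwards with x
  rw [Real.norm_eq_abs, Real.norm_eq_abs, abs_of_nonneg (norm_nonneg _),
    abs_of_nonneg (by positivity)]
  calc ‖x‖ = ‖p₀ - (p₀ - x)‖ := by congr 1; abel
    _ ≤ ‖p₀‖ + ‖p₀ - x‖ := norm_sub_le _ _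
    _ = ‖p₀ - x‖ + ‖p₀‖ := by ring

lemma G_lip {n : ℕ} {μ : Measure (EuclideanSpace ℝ (Fin n))} [IsProbabilityMeasure μ]
    (hnorm : Integrable (fun x => ‖x‖) μ) (u p p' : EuclideanSpace ℝ (Fin n)) :
    |(∫ x, quantileLoss u x p ∂μ) - ∫ x, quantileLoss u x p' ∂μ| ≤ (1 + ‖u‖) * ‖p - p'‖ := by
  rw [← integral_sub (ql_integrable hnorm u p) (ql_integrable hnorm u p')]
  calc |∫ x, (quantileLoss u x p - quantileLoss u x p') ∂μ|
      ≤ ∫ x, |quantileLoss u x p - quantileLoss u x p'| ∂μ := by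
        simpa [Real.norm_eq_abs] using
          norm_integral_le_integral_norm (fun x => quantileLoss u x p - quantileLoss u x p') (μ := μ)
    _ ≤ ∫ _x, (1 + ‖u‖) * ‖p - p'‖ ∂μ := by
        refine integral_mono (((ql_integrable hnorm u p).sub (ql_integrable hnorm u p')).abs)
          (integrable_const _) ?_
        intro x; exact ql_lip u x p p'
    _ = (1 + ‖u‖) * ‖p - p'‖ := by simp

lemma slln_comp {n : ℕ} {μ : Measure (EuclideanSpace ℝ (Fin n))}
    {Ω : Type*} [MeasurableSpace Ω] {P : Measure Ω}
    {X : ℕ → Ω → EuclideanSpace ℝ (Fin n)}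
    (hXmeas : ∀ i, Measurable (X i))
    (hXindep : ProbabilityTheory.iIndepFun X P)
    (hXlaw : ∀ i, P.map (X i) = μ)
    (f : EuclideanSpace ℝ (Fin n) → ℝ) (hfm : Measurable f) (hfint : Integrable f μ) :
    ∀ᵐ ω ∂P, Tendsto (fun N : ℕ => (N : ℝ)⁻¹ * ∑ i ∈ Finset.range N, f (X i ω))
      atTop (𝓝 (∫ x, f x ∂μ)) := by
  have hint0 : Integrable (fun ω => f (X 0 ω)) P := by
    have : Integrable f (P.map (X 0)) := by rw [hXlaw 0]; exact hfint
    rw [← hXlaw 0] at hfint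
    exact (integrable_map_measure hfint.aestronglyMeasurable
      (hXmeas 0).aemeasurable).mp this
  have hindep : Pairwise (Function.onFun (ProbabilityTheory.IndepFun · · P) fun i ω => f (X i ω)) :=
    fun i j hij => (hXindep.indepFun hij).comp hfm hfm
  have hident : ∀ i, ProbabilityTheory.IdentDistrib (fun ω => f (X i ω)) (fun ω => f (X 0 ω)) P P := by
    intro i
    have hXid : ProbabilityTheory.IdentDistrib (X i) (X 0) P P :=
      ⟨(hXmeas i).aemeasurable, (hXmeas 0).aemeasurable, by rw [hXlaw i, hXlaw 0]⟩
    exact hXid.comp hfm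
  have h := ProbabilityTheory.strong_law_ae_real (fun i ω => f (X i ω)) hint0 hindep hident
  have heq : ∫ ω, f (X 0 ω) ∂P = ∫ x, f x ∂μ := by
    rw [← hXlaw 0] at hfint ⊢
    rw [integral_map (hXmeas 0).aemeasurable hfint.aestronglyMeasurable]
  filter_upwards [h] with ω hω
  rw [heq] at hω
  convert hω using 2 with N
  rw [inv_mul_eq_div]

set_option maxHeartbeats 1600000 in
/-- Euclidean case of Theorem 4.1(b): strong consistency of sample quantiles when the
population `u`-quantile is unique. -/
theorem sample_quantiles_strongly_consistent
    {n : ℕ} (μ : Measure (EuclideanSpace ℝ (Fin n))) [IsProbabilityMeasure μ]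
    (hμint : ∃ (u₀ p₀ : EuclideanSpace ℝ (Fin n)), ‖u₀‖ < 1 ∧
      Integrable (fun x => quantileLoss u₀ x p₀) μ)
    (u : EuclideanSpace ℝ (Fin n)) (hu : ‖u‖ < 1)
    (q : EuclideanSpace ℝ (Fin n))
    (hq : {q' : EuclideanSpace ℝ (Fin n) | ∀ p, ∫ x, quantileLoss u x q' ∂μ
        ≤ ∫ x, quantileLoss u x p ∂μ} = {q})
    {Ω : Type*} [MeasurableSpace Ω] (P : Measure Ω) [IsProbabilityMeasure P]
    (X : ℕ → Ω → EuclideanSpace ℝ (Fin n))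
    (hXmeas : ∀ i, Measurable (X i))
    (hXindep : ProbabilityTheory.iIndepFun X P)
    (hXlaw : ∀ i, P.map (X i) = μ)
    (qhat : ℕ → Ω → EuclideanSpace ℝ (Fin n))
    (hqhat : ∀ᵐ ω ∂P, ∀ N : ℕ, 1 ≤ N →
      ∀ p : EuclideanSpace ℝ (Fin n),
        (N : ℝ)⁻¹ * ∑ i ∈ Finset.range N, quantileLoss u (X i ω) (qhat N ω)
          ≤ (N : ℝ)⁻¹ * ∑ i ∈ Finset.range N, quantileLoss u (X i ω) p) :
    ∀ᵐ ω ∂P, Tendsto (fun N => qhat N ω) atTop (nhds q) := by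
  classical
  obtain ⟨u₀, p₀, hu₀, hint₀⟩ := hμint
  have hnorm : Integrable (fun x => ‖x‖) μ := norm_integrable_of_assumption hu₀ hint₀
  set L : ℝ := 1 + ‖u‖ with hLdef
  have hL : 0 < L := by positivity
  have hc : (0:ℝ) < 1 - ‖u‖ := by linarith
  set G : EuclideanSpace ℝ (Fin n) → ℝ := fun p => ∫ x, quantileLoss u x p ∂μ with hGdef
  have hGmin : ∀ p, G q ≤ G p := by
    have hqmem : q ∈ ({q} : Set (EuclideanSpace ℝ (Fin n))) := rfl
    rw [← hq] at hqmem
    exact hqmem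
  have hGlip : ∀ p p' : EuclideanSpace ℝ (Fin n), |G p - G p'| ≤ L * ‖p - p'‖ := fun p p' => G_lip hnorm u p p'
  have hGc : Continuous G := by
    refine (LipschitzWith.of_dist_le_mul (K := Real.toNNReal L) (f := G) ?_).continuous
    intro p p'
    rw [Real.coe_toNNReal _ hL.le, Real.dist_eq, dist_eq_norm]
    exact hGlip p p'
  set C : ℝ := ∫ x, ‖x‖ ∂μ with hCdef
  set d : ℕ → EuclideanSpace ℝ (Fin n) := TopologicalSpace.denseSeq (EuclideanSpace ℝ (Fin n)) with hddef
  have hd : DenseRange d := TopologicalSpace.denseRange_denseSeq (EuclideanSpace ℝ (Fin n))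
  -- almost-sure events
  have hA : ∀ᵐ ω ∂P, Tendsto (fun N : ℕ => (N : ℝ)⁻¹ * ∑ i ∈ Finset.range N, ‖X i ω‖)
      atTop (𝓝 C) :=
    slln_comp hXmeas hXindep hXlaw _ measurable_norm hnorm
  have hB : ∀ᵐ ω ∂P, ∀ k : ℕ, Tendsto
      (fun N : ℕ => (N : ℝ)⁻¹ * ∑ i ∈ Finset.range N, quantileLoss u (X i ω) (d k))
      atTop (𝓝 (G (d k))) := by
    rw [ae_all_iff]
    intro k
    exact slln_comp hXmeas hXindep hXlaw _ (ql_cont u (d k)).measurable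
      (ql_integrable hnorm u (d k))
  have hFq : ∀ᵐ ω ∂P, Tendsto
      (fun N : ℕ => (N : ℝ)⁻¹ * ∑ i ∈ Finset.range N, quantileLoss u (X i ω) q)
      atTop (𝓝 (G q)) :=
    slln_comp hXmeas hXindep hXlaw _ (ql_cont u q).measurable (ql_integrable hnorm u q)
  filter_upwards [hA, hB, hFq, hqhat] with ω hAω hBω hFqω hQω
  set F : ℕ → EuclideanSpace ℝ (Fin n) → ℝ := fun N p => (N : ℝ)⁻¹ * ∑ i ∈ Finset.range N, quantileLoss u (X i ω) p
    with hFdef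
  set A : ℕ → ℝ := fun N => (N : ℝ)⁻¹ * ∑ i ∈ Finset.range N, ‖X i ω‖ with hAdef
  -- uniform Lipschitz bound for the empirical losses
  have lipF : ∀ (N : ℕ) (p p' : EuclideanSpace ℝ (Fin n)), |F N p - F N p'| ≤ L * ‖p - p'‖ := by
    intro N p p'
    have e1 : F N p - F N p' = (N : ℝ)⁻¹ *
        ∑ i ∈ Finset.range N, (quantileLoss u (X i ω) p - quantileLoss u (X i ω) p') := by
      simp only [hFdef, Finset.sum_sub_distrib, mul_sub]
    rw [e1, abs_mul, abs_inv, Nat.abs_cast]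
    have h2 : |∑ i ∈ Finset.range N,
        (quantileLoss u (X i ω) p - quantileLoss u (X i ω) p')| ≤ (N : ℝ) * (L * ‖p - p'‖) := by
      calc |∑ i ∈ Finset.range N, (quantileLoss u (X i ω) p - quantileLoss u (X i ω) p')|
          ≤ ∑ i ∈ Finset.range N, |quantileLoss u (X i ω) p - quantileLoss u (X i ω) p'| :=
            Finset.abs_sum_le_sum_abs _ _
        _ ≤ ∑ _i ∈ Finset.range N, L * ‖p - p'‖ :=
            Finset.sum_le_sum fun i _ => ql_lip u (X i ω) p p'
        _ = (N : ℝ) * (L * ‖p - p'‖) := by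
            rw [Finset.sum_const, Finset.card_range, nsmul_eq_mul]
    rcases Nat.eq_zero_or_pos N with hN | hN
    · subst hN; simp; positivity
    · have hNne : (N : ℝ) ≠ 0 := Nat.cast_ne_zero.mpr hN.ne'
      calc (N : ℝ)⁻¹ * |∑ i ∈ Finset.range N,
            (quantileLoss u (X i ω) p - quantileLoss u (X i ω) p')|
          ≤ (N : ℝ)⁻¹ * ((N : ℝ) * (L * ‖p - p'‖)) := by
            exact mul_le_mul_of_nonneg_left h2 (by positivity)
        _ = L * ‖p - p'‖ := by field_simp
  -- eventual boundedness of the sample quantiles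
  set R : ℝ := C + 1 + (G q + 1) / (1 - ‖u‖) with hRdef
  have hbound : ∀ᶠ N : ℕ in atTop, ‖qhat N ω‖ ≤ R := by
    have e1 : ∀ᶠ N : ℕ in atTop, A N < C + 1 :=
      hAω.eventually (Filter.Tendsto.eventually_lt_const (by linarith) tendsto_id)
    have e2 : ∀ᶠ N : ℕ in atTop, F N q < G q + 1 :=
      hFqω.eventually (Filter.Tendsto.eventually_lt_const (by linarith) tendsto_id)
    filter_upwards [e1, e2, eventually_ge_atTop 1] with N hA1 hF1 hN1
    have hNne : (N : ℝ) ≠ 0 := Nat.cast_ne_zero.mpr (by omega)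
    have hQ : F N (qhat N ω) ≤ F N q := hQω N hN1 q
    have s1 : ∑ i ∈ Finset.range N, (1 - ‖u‖) * (‖qhat N ω‖ - ‖X i ω‖)
        ≤ ∑ i ∈ Finset.range N, quantileLoss u (X i ω) (qhat N ω) := by
      refine Finset.sum_le_sum fun i _ => ?_
      have h1 := ql_lower u (X i ω) (qhat N ω)
      have h2 : ‖qhat N ω‖ - ‖X i ω‖ ≤ ‖qhat N ω - X i ω‖ := norm_sub_norm_le _ _
      nlinarith
    have s2 : ∑ i ∈ Finset.range N, (1 - ‖u‖) * (‖qhat N ω‖ - ‖X i ω‖)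
        = (1 - ‖u‖) * ((N : ℝ) * ‖qhat N ω‖ - ∑ i ∈ Finset.range N, ‖X i ω‖) := by
      rw [← Finset.mul_sum, Finset.sum_sub_distrib, Finset.sum_const, Finset.card_range,
        nsmul_eq_mul]
    have hlow : (1 - ‖u‖) * (‖qhat N ω‖ - A N) ≤ F N (qhat N ω) := by
      have e3 : (1 - ‖u‖) * (‖qhat N ω‖ - A N)
          = (N : ℝ)⁻¹ * ((1 - ‖u‖) * ((N : ℝ) * ‖qhat N ω‖ - ∑ i ∈ Finset.range N, ‖X i ω‖)) := by
        simp only [hAdef]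
        have hNN : (N : ℝ)⁻¹ * (N : ℝ) = 1 := inv_mul_cancel₀ hNne
        linear_combination (-(1 - ‖u‖) * ‖qhat N ω‖) * hNN
      rw [e3, ← s2]
      exact mul_le_mul_of_nonneg_left s1 (by positivity)
    have h4 : ‖qhat N ω‖ - A N ≤ (G q + 1) / (1 - ‖u‖) := by
      rw [le_div_iff₀ hc]
      nlinarith
    rw [hRdef]
    linarith
  -- uniform convergence of the empirical losses on the ball of radius R
  have hU : ∀ ε' : ℝ, 0 < ε' → ∀ᶠ N : ℕ in atTop,
      ∀ p ∈ Metric.closedBall (0 : EuclideanSpace ℝ (Fin n)) R, |F N p - G p| < ε' := by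
    intro ε' hε'
    set δ : ℝ := ε' / (4 * L) with hδdef
    have hδ : 0 < δ := by positivity
    have hcover : Metric.closedBall (0 : EuclideanSpace ℝ (Fin n)) R ⊆ ⋃ k, Metric.ball (d k) δ := by
      intro p _
      obtain ⟨k, hk⟩ := hd.exists_dist_lt p hδ
      exact Set.mem_iUnion.mpr ⟨k, by simpa [Metric.mem_ball, dist_comm] using hk⟩
    obtain ⟨t, ht⟩ := (isCompact_closedBall (0 : EuclideanSpace ℝ (Fin n)) R).elim_finite_subcover
      (fun k => Metric.ball (d k) δ) (fun k => Metric.isOpen_ball) hcover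
    have hev : ∀ᶠ N : ℕ in atTop, ∀ k ∈ t, |F N (d k) - G (d k)| < ε' / 4 := by
      rw [eventually_all_finset]
      intro k _
      have := (hBω k).eventually (eventually_abs_sub_lt (G (d k)) (show (0:ℝ) < ε' / 4 by positivity))
      exact this
    filter_upwards [hev] with N hN p hp
    obtain ⟨k, hkt, hpk⟩ : ∃ k ∈ t, p ∈ Metric.ball (d k) δ := by
      have := ht hp
      simpa [Set.mem_iUnion] using this
    have hdist : ‖p - d k‖ < δ := by
      rw [← dist_eq_norm]
      exact hpk
    have h1 : |F N p - F N (d k)| ≤ L * δ := le_trans (lipF N p (d k))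
      (by nlinarith [hL, hdist, norm_nonneg (p - d k)])
    have h2 : |G (d k) - G p| ≤ L * δ := le_trans (hGlip (d k) p)
      (by rw [show d k - p = -(p - d k) by abel, norm_neg]; nlinarith)
    have h3 := hN k hkt
    have hLδ : L * δ = ε' / 4 := by
      rw [hδdef]; field_simp
    calc |F N p - G p| ≤ |F N p - F N (d k)| + |F N (d k) - G (d k)| + |G (d k) - G p| := by
          have e : F N p - G p = (F N p - F N (d k)) + (F N (d k) - G (d k)) + (G (d k) - G p) := by
            ring
          rw [e]
          exact abs_add_three _ _ _
      _ < ε' := by rw [hLδ] at h1 h2; linarith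
  -- conclusion via the compact exhaustion argument
  rw [Metric.tendsto_nhds]
  intro ε hε
  set K : Set (EuclideanSpace ℝ (Fin n)) := Metric.closedBall (0 : EuclideanSpace ℝ (Fin n)) R \ Metric.ball q ε with hKdef
  by_cases hKe : K.Nonempty
  · obtain ⟨z, hzK, hz⟩ := ((isCompact_closedBall (0 : EuclideanSpace ℝ (Fin n)) R).diff Metric.isOpen_ball).exists_isMinOn
      hKe hGc.continuousOn
    have hzq : z ≠ q := by
      intro h
      have : z ∈ Metric.ball q ε := by rw [h]; exact Metric.mem_ball_self hε
      exact hzK.2 this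
    have hGz : G q < G z := by
      rcases (hGmin z).lt_or_eq with h | h
      · exact h
      · exfalso
        apply hzq
        have hzmem : z ∈ {q' : EuclideanSpace ℝ (Fin n) | ∀ p, ∫ x, quantileLoss u x q' ∂μ ≤ ∫ x, quantileLoss u x p ∂μ} := by
          intro p
          show G z ≤ G p
          rw [← h]
          exact hGmin p
        rw [hq] at hzmem
        exact hzmem
    set γ : ℝ := (G z - G q) / 4 with hγdef
    have hγ : 0 < γ := by rw [hγdef]; linarith
    have e2 : ∀ᶠ N : ℕ in atTop, F N q < G q + γ :=
      hFqω.eventually (Filter.Tendsto.eventually_lt_const (by linarith) tendsto_id)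
    filter_upwards [hbound, hU γ hγ, e2, eventually_ge_atTop 1] with N h1 h2 h3 hN1
    have hQ : F N (qhat N ω) ≤ F N q := hQω N hN1 q
    have hmem : qhat N ω ∈ Metric.closedBall (0 : EuclideanSpace ℝ (Fin n)) R := by
      rw [Metric.mem_closedBall, dist_zero_right]; exact h1
    have h5 : |F N (qhat N ω) - G (qhat N ω)| < γ := h2 _ hmem
    have h6 : G (qhat N ω) < G z := by
      have := abs_sub_abs_le_abs_sub (F N (qhat N ω) - G (qhat N ω)) 0
      have h7 : G (qhat N ω) - F N (qhat N ω) ≤ |F N (qhat N ω) - G (qhat N ω)| := by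
        rw [abs_sub_comm]; exact le_abs_self _
      rw [hγdef] at *
      linarith
    by_contra hcon
    push_neg at hcon
    have : qhat N ω ∈ K := ⟨hmem, by rw [Metric.mem_ball]; exact not_lt.mpr hcon⟩
    exact absurd (hz this) (not_le.mpr h6)
  · filter_upwards [hbound] with N h1
    have hmem : qhat N ω ∈ Metric.closedBall (0 : EuclideanSpace ℝ (Fin n)) R := by
      rw [Metric.mem_closedBall, dist_zero_right]; exact h1
    by_contra hcon
    push_neg at hcon
    exact hKe ⟨qhat N ω, hmem, by rw [Metric.mem_ball]; exact not_lt.mpr hcon⟩
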